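/- Let (α₁, β₁, α₂, β₂) ∈ ℝ⁴ with β₁ > 0, and let f be a probability density function on (x_i, x_f) (with x_i > −∞) that is twice differentiable with f'(x) < 0 on (x_i, x_f) and satisfies sup_x f(x)f''(x)/(f'(x))² < α₁/β₁. Then g₁ = 𝔇_{α₁,β₁}[f] is a differentiable strictly decreasing pdf and, provided the integrals below are finite, S[𝔇_{α₂,β₂}[g₁]] = (α₁α₂ + 2β₂ − 2α₁β₂) S[f] + (β₁α₂ + β₂ − 2β₁β₂) ∫ f(x) log|f'(x)| dx + β₂ ∫ f(x) log| f(x)f''(x)/(f'(x))² − α₁/β₁ | dx + β₂ log β₁. -/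

import Mathlib

open MeasureTheory Set Filter Topology

noncomputable section

/-- The open interval with extended-real endpoints, viewed as a set of reals. -/
def intIoo (a b : EReal) : Set ℝ := {x : ℝ | a < (x : EReal) ∧ (x : EReal) < b}

namespace DownAux

lemma prod_eq {p q : ℝ} (hp : 0 < p) (hq : 0 < q) (α β : ℝ) :
    (p ^ (1 - α) * q ^ β) * (p ^ α * q ^ (-β)) = p := by
  rw [mul_mul_mul_comm, ← Real.rpow_add hp, ← Real.rpow_add hq]
  norm_num

lemma log_eq {p q : ℝ} (hp : 0 < p) (hq : 0 < q) (α β : ℝ) :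
    Real.log (p ^ α * q ^ (-β)) = α * Real.log p - β * Real.log q := by
  rw [Real.log_mul (Real.rpow_pos_of_pos hp α).ne' (Real.rpow_pos_of_pos hq (-β)).ne',
    Real.log_rpow hp, Real.log_rpow hq]
  ring

lemma deriv_val {a b c α β : ℝ} (ha : 0 < a) (hb : b < 0) (hβ : β ≠ 0) :
    (b * α * a ^ (α - 1) * (-b) ^ (-β) + a ^ α * (-c * -β * (-b) ^ (-β - 1)))
      * (a ^ (1 - α) * (-b) ^ β)⁻¹
    = β * a ^ (2 * α - 2) * (-b) ^ (1 - 2 * β) * (a * c / b ^ 2 - α / β) := by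
  set B := -b with hB
  have hBpos : 0 < B := neg_pos.2 hb
  have hbB : b = -B := by rw [hB]; ring
  rw [hbB]
  have e1 : a ^ (α - 1) = a ^ α / a := by rw [Real.rpow_sub ha, Real.rpow_one]
  have e2 : a ^ (1 - α) = a / a ^ α := by rw [Real.rpow_sub ha, Real.rpow_one]
  have e3 : B ^ (-β) = (B ^ β)⁻¹ := Real.rpow_neg hBpos.le β
  have e4 : B ^ (-β - 1) = (B ^ β)⁻¹ / B := by
    rw [Real.rpow_sub hBpos, Real.rpow_one, Real.rpow_neg hBpos.le]
  have e5 : a ^ (2 * α - 2) = a ^ (α - 1) * a ^ (α - 1) := by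
    rw [← Real.rpow_add ha]; congr 1; ring
  have e6 : B ^ (1 - 2 * β) = B * (B ^ (-β) * B ^ (-β)) := by
    rw [← Real.rpow_add hBpos, show B * B ^ (-β + -β) = B ^ (1:ℝ) * B ^ (-β + -β) by
      rw [Real.rpow_one], ← Real.rpow_add hBpos]
    congr 1; ring
  have hP : (0:ℝ) < a ^ α := Real.rpow_pos_of_pos ha α
  have hQ : (0:ℝ) < B ^ β := Real.rpow_pos_of_pos hBpos β
  rw [e5, e6, e3, e4, e1, e2]
  field_simp
  ring

end DownAux

/-- the biparametric down transform `g₁ = 𝔇_{α₁,β₁}[f]` of a strictly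
decreasing twice differentiable density with `sup f f''/(f')² < α₁/β₁` is a
differentiable strictly decreasing pdf, and the Shannon entropy of its further
biparametric down transform `𝔇_{α₂,β₂}[g₁]` has the stated closed form. -/
theorem shannon_entropy_of_iterated_biparametric_down_transform
    (α₁ β₁ α₂ β₂ : ℝ) (hβ₁ : 0 < β₁)
    (xi : ℝ) (xf : EReal) (hif : (xi : EReal) < xf)
    (f f' f'' s₁ g₁ : ℝ → ℝ)
    (hf_meas : Measurable f)
    (hf_nonneg : ∀ x, 0 ≤ f x)
    (hf_supp : ∀ x ∉ intIoo (xi : EReal) xf, f x = 0)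
    (hf_int : (∫ x, f x) = 1)
    (hf' : ∀ x ∈ intIoo (xi : EReal) xf, HasDerivAt f (f' x) x)
    (hf'' : ∀ x ∈ intIoo (xi : EReal) xf, HasDerivAt f' (f'' x) x)
    (hf'_neg : ∀ x ∈ intIoo (xi : EReal) xf, f' x < 0)
    (hsup : ∃ c, c < α₁ / β₁ ∧
      ∀ x ∈ intIoo (xi : EReal) xf, f x * f'' x / (f' x) ^ 2 ≤ c)
    (hs₁ : ∀ x ∈ intIoo (xi : EReal) xf,
      HasDerivAt s₁ (f x ^ (1 - α₁) * |f' x| ^ β₁) x)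
    (hs₁_mono : StrictMonoOn s₁ (intIoo (xi : EReal) xf))
    (hg₁ : ∀ x ∈ intIoo (xi : EReal) xf, g₁ (s₁ x) = f x ^ α₁ * |f' x| ^ (-β₁))
    (hg₁_supp : ∀ y ∉ s₁ '' intIoo (xi : EReal) xf, g₁ y = 0) :
    ((∀ y, 0 ≤ g₁ y) ∧ (∫ y, g₁ y) = 1 ∧
      StrictAntiOn g₁ (s₁ '' intIoo (xi : EReal) xf))
    ∧ ∃ g₁' : ℝ → ℝ,
      (∀ x ∈ intIoo (xi : EReal) xf,
        HasDerivAt g₁ (g₁' (s₁ x)) (s₁ x) ∧ g₁' (s₁ x) < 0)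
      ∧ ∀ s₂ g₂ : ℝ → ℝ,
        (∀ y ∈ s₁ '' intIoo (xi : EReal) xf,
          HasDerivAt s₂ (g₁ y ^ (1 - α₂) * |g₁' y| ^ β₂) y) →
        StrictMonoOn s₂ (s₁ '' intIoo (xi : EReal) xf) →
        (∀ y ∈ s₁ '' intIoo (xi : EReal) xf,
          g₂ (s₂ y) = g₁ y ^ α₂ * |g₁' y| ^ (-β₂)) →
        (∀ z ∉ s₂ '' (s₁ '' intIoo (xi : EReal) xf), g₂ z = 0) →
        Integrable (fun z => g₂ z * Real.log (g₂ z)) →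
        Integrable (fun x => f x * Real.log (f x)) →
        Integrable (fun x => f x * Real.log |f' x|) →
        Integrable (fun x => f x * Real.log |f x * f'' x / (f' x) ^ 2 - α₁ / β₁|) →
        (-∫ z, g₂ z * Real.log (g₂ z))
          = (α₁ * α₂ + 2 * β₂ - 2 * α₁ * β₂) * (-∫ x, f x * Real.log (f x))
            + (β₁ * α₂ + β₂ - 2 * β₁ * β₂) * (∫ x, f x * Real.log |f' x|)
            + β₂ * (∫ x, f x * Real.log |f x * f'' x / (f' x) ^ 2 - α₁ / β₁|)
            + β₂ * Real.log β₁ := by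
  classical
  obtain ⟨c₀, hc₀, hsupc⟩ := hsup
  set I := intIoo (xi : EReal) xf with hIdef
  have hIpre : I = ((↑) : ℝ → EReal) ⁻¹' (Set.Ioo (xi : EReal) xf) := rfl
  have hI_open : IsOpen I := by
    rw [hIpre]; exact isOpen_Ioo.preimage continuous_coe_real_ereal
  have hI_meas : MeasurableSet I := hI_open.measurableSet
  have hI_conv : Convex ℝ I := by
    rw [convex_iff_ordConnected, hIpre]
    exact Set.ordConnected_Ioo.preimage_mono (fun u v huv => EReal.coe_le_coe_iff.2 huv)
  -- f is strictly decreasing on I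
  have hf_anti : StrictAntiOn f I := by
    apply strictAntiOn_of_deriv_neg hI_conv
    · exact fun y hy => (hf' y hy).continuousAt.continuousWithinAt
    · intro y hy
      rw [hI_open.interior_eq] at hy
      rw [(hf' y hy).deriv]; exact hf'_neg y hy
  -- f is positive on I
  have hf_pos : ∀ x ∈ I, 0 < f x := by
    intro x hx
    obtain ⟨z, hz1, hz2⟩ := EReal.exists_between_coe_real hx.2
    have hzI : z ∈ I := ⟨lt_trans hx.1 hz1, hz2⟩
    have hxz : x < z := by exact_mod_cast hz1
    exact lt_of_le_of_lt (hf_nonneg z) (hf_anti hx hzI hxz)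
  have hb_pos : ∀ x ∈ I, 0 < |f' x| := fun x hx => abs_pos.2 (hf'_neg x hx).ne
  set sd : ℝ → ℝ := fun x => f x ^ (1 - α₁) * |f' x| ^ β₁ with hsd
  have hsd_pos : ∀ x ∈ I, 0 < sd x := fun x hx =>
    mul_pos (Real.rpow_pos_of_pos (hf_pos x hx) _) (Real.rpow_pos_of_pos (hb_pos x hx) _)
  have hsd_cont : ∀ x ∈ I, ContinuousAt sd x := by
    intro x hx
    have h1 : ContinuousAt (fun t => f t ^ (1 - α₁)) x :=
      ContinuousAt.rpow_const (hf' x hx).continuousAt (Or.inl (hf_pos x hx).ne')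
    have h2 : ContinuousAt (fun t => |f' t| ^ β₁) x :=
      ContinuousAt.rpow_const ((hf'' x hx).continuousAt.abs) (Or.inl (hb_pos x hx).ne')
    exact h1.mul h2
  have hs₁_strict : ∀ x ∈ I, HasStrictDerivAt s₁ (sd x) x := by
    intro x hx
    refine hasStrictDerivAt_of_hasDerivAt_of_continuousAt ?_ (hsd_cont x hx)
    filter_upwards [hI_open.mem_nhds hx] with y hy using hs₁ y hy
  set D : ℝ → ℝ := fun x => f x * f'' x / (f' x) ^ 2 - α₁ / β₁ with hDdef
  set G : ℝ → ℝ := fun x => β₁ * f x ^ (2 * α₁ - 2) * |f' x| ^ (1 - 2 * β₁) * D x with hGdef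
  have hD_neg : ∀ x ∈ I, D x < 0 := fun x hx => sub_neg.2 (lt_of_le_of_lt (hsupc x hx) hc₀)
  have hG_neg : ∀ x ∈ I, G x < 0 := by
    intro x hx
    have hpos : 0 < β₁ * f x ^ (2 * α₁ - 2) * |f' x| ^ (1 - 2 * β₁) :=
      mul_pos (mul_pos hβ₁ (Real.rpow_pos_of_pos (hf_pos x hx) _))
        (Real.rpow_pos_of_pos (hb_pos x hx) _)
    exact mul_neg_of_pos_of_neg hpos (hD_neg x hx)
  -- the derivative of g₁
  have hg₁_deriv : ∀ x ∈ I, HasDerivAt g₁ (G x) (s₁ x) := by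
    intro x hx
    have ha : 0 < f x := hf_pos x hx
    have hbneg : f' x < 0 := hf'_neg x hx
    have hb : 0 < -f' x := neg_pos.2 hbneg
    have hs := hs₁_strict x hx
    have hne : sd x ≠ 0 := (hsd_pos x hx).ne'
    set L := hs.localInverse s₁ (sd x) x hne with hLdef
    have hLx : L (s₁ x) = x := (hs.hasStrictFDerivAt_equiv hne).localInverse_apply_image
    have hLd : HasStrictDerivAt L (sd x)⁻¹ (s₁ x) := hs.to_localInverse hne
    have hLev : ∀ᶠ y in 𝓝 (s₁ x), s₁ (L y) = y :=
      (hs.hasStrictFDerivAt_equiv hne).eventually_right_inverse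
    have hLmem : ∀ᶠ y in 𝓝 (s₁ x), L y ∈ I :=
      hLd.hasDerivAt.continuousAt.eventually_mem (hI_open.mem_nhds (hLx.symm ▸ hx))
    set F₀ : ℝ → ℝ := fun t => f t ^ α₁ * (-f' t) ^ (-β₁) with hF₀def
    have hFd : HasDerivAt F₀
        (f' x * α₁ * f x ^ (α₁ - 1) * (-f' x) ^ (-β₁)
          + f x ^ α₁ * (-f'' x * -β₁ * (-f' x) ^ (-β₁ - 1))) x := by
      have h1 : HasDerivAt (fun t => f t ^ α₁) (f' x * α₁ * f x ^ (α₁ - 1)) x :=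
        (hf' x hx).rpow_const (Or.inl ha.ne')
      have h2 : HasDerivAt (fun t => (-f' t) ^ (-β₁))
          (-f'' x * -β₁ * (-f' x) ^ (-β₁ - 1)) x :=
        ((hf'' x hx).neg).rpow_const (Or.inl hb.ne')
      exact h1.mul h2
    have hFd' : HasDerivAt F₀
        (f' x * α₁ * f x ^ (α₁ - 1) * (-f' x) ^ (-β₁)
          + f x ^ α₁ * (-f'' x * -β₁ * (-f' x) ^ (-β₁ - 1))) (L (s₁ x)) := by
      rw [hLx]; exact hFd
    have hcomp := hFd'.comp (s₁ x) hLd.hasDerivAt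
    have hev : g₁ =ᶠ[𝓝 (s₁ x)] F₀ ∘ L := by
      filter_upwards [hLev, hLmem] with y h1 h2
      have h3 := hg₁ (L y) h2
      rw [h1] at h3
      rw [h3, Function.comp_apply, hF₀def]
      rw [abs_of_neg (hf'_neg (L y) h2)]
    have hfinal := hcomp.congr_of_eventuallyEq hev
    have hval : (f' x * α₁ * f x ^ (α₁ - 1) * (-f' x) ^ (-β₁)
          + f x ^ α₁ * (-f'' x * -β₁ * (-f' x) ^ (-β₁ - 1))) * (sd x)⁻¹ = G x := by
      have habs : |f' x| = -f' x := abs_of_neg hbneg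
      rw [hGdef, hsd]
      simp only [habs, hDdef]
      exact DownAux.deriv_val ha hbneg hβ₁.ne' (c := f'' x) (α := α₁)
    rwa [hval] at hfinal
  -- openness of the image
  have himg_nhds : ∀ x ∈ I, s₁ '' I ∈ 𝓝 (s₁ x) := by
    intro x hx
    have hmap := (hs₁_strict x hx).map_nhds_eq (hsd_pos x hx).ne'
    rw [← hmap]
    exact image_mem_map (hI_open.mem_nhds hx)
  have himg_open : IsOpen (s₁ '' I) := by
    rw [isOpen_iff_mem_nhds]
    rintro y ⟨x, hx, rfl⟩
    exact himg_nhds x hx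
  have himg_meas : MeasurableSet (s₁ '' I) := himg_open.measurableSet
  -- positivity of g₁ on the image
  have hg₁_pos : ∀ x ∈ I, 0 < g₁ (s₁ x) := by
    intro x hx
    rw [hg₁ x hx]
    exact mul_pos (Real.rpow_pos_of_pos (hf_pos x hx) _)
      (Real.rpow_pos_of_pos (hb_pos x hx) _)
  have hg₁_nonneg : ∀ y, 0 ≤ g₁ y := by
    intro y
    by_cases hy : y ∈ s₁ '' I
    · obtain ⟨x, hx, rfl⟩ := hy; exact (hg₁_pos x hx).le
    · rw [hg₁_supp y hy]
  -- change of variables for s₁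
  have hCoV1 : ∀ h : ℝ → ℝ, ∫ y in s₁ '' I, h y = ∫ x in I, |sd x| • h (s₁ x) :=
    fun h => integral_image_eq_integral_abs_deriv_smul hI_meas
      (fun x hx => (hs₁ x hx).hasDerivWithinAt) hs₁_mono.injOn h
  have habs_sd : ∀ x ∈ I, |sd x| = sd x := fun x hx => abs_of_pos (hsd_pos x hx)
  -- ∫ g₁ = 1
  have hsdg₁ : ∀ x ∈ I, sd x * g₁ (s₁ x) = f x := by
    intro x hx
    rw [hg₁ x hx, hsd]
    exact DownAux.prod_eq (hf_pos x hx) (hb_pos x hx) α₁ β₁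
  have hintI_f : ∫ x in I, f x = 1 := by
    rw [setIntegral_eq_integral_of_forall_compl_eq_zero hf_supp, hf_int]
  have hint_g₁ : (∫ y, g₁ y) = 1 := by
    rw [← setIntegral_eq_integral_of_forall_compl_eq_zero hg₁_supp, hCoV1 g₁]
    rw [setIntegral_congr_fun hI_meas (g := f) (fun x hx => by
      rw [smul_eq_mul, habs_sd x hx, hsdg₁ x hx])]
    exact hintI_f
  -- g₁ strictly decreasing on the image
  have himg_conv : Convex ℝ (s₁ '' I) := by
    rw [convex_iff_ordConnected]
    apply IsPreconnected.ordConnected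
    exact (hI_conv.isPreconnected).image s₁
      (fun x hx => (hs₁ x hx).continuousAt.continuousWithinAt)
  have hg₁_anti : StrictAntiOn g₁ (s₁ '' I) := by
    apply strictAntiOn_of_deriv_neg himg_conv
    · rintro y ⟨x, hx, rfl⟩
      exact (hg₁_deriv x hx).continuousAt.continuousWithinAt
    · intro y hy
      rw [himg_open.interior_eq] at hy
      obtain ⟨x, hx, rfl⟩ := hy
      rw [(hg₁_deriv x hx).deriv]; exact hG_neg x hx
  -- the derivative function
  set g₁'f : ℝ → ℝ := (s₁ '' I).indicator (fun y => G (Function.invFunOn s₁ I y)) with hg₁'fdef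
  have hg₁'f_eq : ∀ x ∈ I, g₁'f (s₁ x) = G x := by
    intro x hx
    have hmem : s₁ x ∈ s₁ '' I := ⟨x, hx, rfl⟩
    rw [hg₁'fdef, Set.indicator_of_mem hmem]
    have h1 : Function.invFunOn s₁ I (s₁ x) ∈ I := Function.invFunOn_mem ⟨x, hx, rfl⟩
    have h2 : s₁ (Function.invFunOn s₁ I (s₁ x)) = s₁ x := Function.invFunOn_eq ⟨x, hx, rfl⟩
    rw [hs₁_mono.injOn h1 hx h2]
  refine ⟨⟨hg₁_nonneg, hint_g₁, hg₁_anti⟩, g₁'f, fun x hx => ⟨?_, ?_⟩, ?_⟩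
  · rw [hg₁'f_eq x hx]; exact hg₁_deriv x hx
  · rw [hg₁'f_eq x hx]; exact hG_neg x hx
  intro s₂ g₂ hs₂ hs₂_mono hg₂ hg₂_supp hInt₂ hIntf hIntf' hIntD
  have hq_pos : ∀ x ∈ I, 0 < |g₁'f (s₁ x)| := fun x hx => by
    rw [hg₁'f_eq x hx]; exact abs_pos.2 (hG_neg x hx).ne
  have hCoV2 : ∀ h : ℝ → ℝ, ∫ z in s₂ '' (s₁ '' I), h z
      = ∫ y in s₁ '' I, |g₁ y ^ (1 - α₂) * |g₁'f y| ^ β₂| • h (s₂ y) :=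
    fun h => integral_image_eq_integral_abs_deriv_smul himg_meas
      (fun y hy => (hs₂ y hy).hasDerivWithinAt) hs₂_mono.injOn h
  have hstep1 : (∫ z, g₂ z * Real.log (g₂ z))
      = ∫ y in s₁ '' I, g₁ y * (α₂ * Real.log (g₁ y) - β₂ * Real.log |g₁'f y|) := by
    rw [← setIntegral_eq_integral_of_forall_compl_eq_zero
      (s := s₂ '' (s₁ '' I)) (fun z hz => by rw [hg₂_supp z hz]; simp)]
    rw [hCoV2 (fun z => g₂ z * Real.log (g₂ z))]
    apply setIntegral_congr_fun himg_meas
    rintro y ⟨x, hx, rfl⟩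
    have hp : 0 < g₁ (s₁ x) := hg₁_pos x hx
    have hq : 0 < |g₁'f (s₁ x)| := hq_pos x hx
    have hdpos : 0 < g₁ (s₁ x) ^ (1 - α₂) * |g₁'f (s₁ x)| ^ β₂ :=
      mul_pos (Real.rpow_pos_of_pos hp _) (Real.rpow_pos_of_pos hq _)
    simp only [smul_eq_mul]
    rw [abs_of_pos hdpos, hg₂ (s₁ x) ⟨x, hx, rfl⟩, ← mul_assoc,
      DownAux.prod_eq hp hq, DownAux.log_eq hp hq]
  have hstep2 : (∫ y in s₁ '' I, g₁ y * (α₂ * Real.log (g₁ y) - β₂ * Real.log |g₁'f y|))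
      = ∫ x in I, ((α₁ * α₂ - β₂ * (2 * α₁ - 2)) * (f x * Real.log (f x))
          + ((-(β₁ * α₂) - β₂ * (1 - 2 * β₁)) * (f x * Real.log |f' x|)
          + ((-β₂) * (f x * Real.log |f x * f'' x / (f' x) ^ 2 - α₁ / β₁|)
          + (-(β₂ * Real.log β₁)) * f x))) := by
    rw [hCoV1 (fun y => g₁ y * (α₂ * Real.log (g₁ y) - β₂ * Real.log |g₁'f y|))]
    apply setIntegral_congr_fun hI_meas
    intro x hx
    have ha := hf_pos x hx
    have hb := hb_pos x hx
    have hlog1 : Real.log (g₁ (s₁ x)) = α₁ * Real.log (f x) - β₁ * Real.log |f' x| := by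
      rw [hg₁ x hx]; exact DownAux.log_eq ha hb α₁ β₁
    have hDne : (f x * f'' x / (f' x) ^ 2 - α₁ / β₁) ≠ 0 := by
      have h := hD_neg x hx
      simp only [hDdef] at h
      exact h.ne
    have hpos2 : 0 < β₁ * f x ^ (2 * α₁ - 2) :=
      mul_pos hβ₁ (Real.rpow_pos_of_pos ha _)
    have hpos3 : 0 < β₁ * f x ^ (2 * α₁ - 2) * |f' x| ^ (1 - 2 * β₁) :=
      mul_pos hpos2 (Real.rpow_pos_of_pos hb _)
    have hlogG : Real.log |g₁'f (s₁ x)| = Real.log β₁ + (2 * α₁ - 2) * Real.log (f x)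
        + (1 - 2 * β₁) * Real.log |f' x|
        + Real.log |f x * f'' x / (f' x) ^ 2 - α₁ / β₁| := by
      rw [hg₁'f_eq x hx]
      simp only [hGdef, hDdef]
      rw [abs_mul, abs_of_pos hpos3, Real.log_mul hpos3.ne' (abs_ne_zero.2 hDne),
        Real.log_mul hpos2.ne' (Real.rpow_pos_of_pos hb _).ne',
        Real.log_mul hβ₁.ne' (Real.rpow_pos_of_pos ha _).ne',
        Real.log_rpow ha, Real.log_rpow hb]
    simp only [smul_eq_mul]
    rw [habs_sd x hx, ← mul_assoc, hsdg₁ x hx, hlog1, hlogG]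
    ring
  have h₁ : Integrable (fun x => (α₁ * α₂ - β₂ * (2 * α₁ - 2)) * (f x * Real.log (f x)))
      (volume.restrict I) := (hIntf.integrableOn).const_mul _
  have h₂ : Integrable (fun x => (-(β₁ * α₂) - β₂ * (1 - 2 * β₁)) * (f x * Real.log |f' x|))
      (volume.restrict I) := (hIntf'.integrableOn).const_mul _
  have h₃ : Integrable
      (fun x => (-β₂) * (f x * Real.log |f x * f'' x / (f' x) ^ 2 - α₁ / β₁|))
      (volume.restrict I) := (hIntD.integrableOn).const_mul _
  have hf_integrable : Integrable f := by
    by_contra hcon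
    rw [integral_undef hcon] at hf_int
    exact one_ne_zero hf_int.symm
  have h₄ : Integrable (fun x => (-(β₂ * Real.log β₁)) * f x) (volume.restrict I) :=
    (hf_integrable.integrableOn).const_mul _
  have hsplit : (∫ x in I, ((α₁ * α₂ - β₂ * (2 * α₁ - 2)) * (f x * Real.log (f x))
          + ((-(β₁ * α₂) - β₂ * (1 - 2 * β₁)) * (f x * Real.log |f' x|)
          + ((-β₂) * (f x * Real.log |f x * f'' x / (f' x) ^ 2 - α₁ / β₁|)
          + (-(β₂ * Real.log β₁)) * f x))))
      = (α₁ * α₂ - β₂ * (2 * α₁ - 2)) * (∫ x in I, f x * Real.log (f x))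
          + ((-(β₁ * α₂) - β₂ * (1 - 2 * β₁)) * (∫ x in I, f x * Real.log |f' x|)
          + ((-β₂) * (∫ x in I, f x * Real.log |f x * f'' x / (f' x) ^ 2 - α₁ / β₁|)
          + (-(β₂ * Real.log β₁)) * (∫ x in I, f x))) := by
    have h34 : Integrable (fun x =>
        (-β₂) * (f x * Real.log |f x * f'' x / (f' x) ^ 2 - α₁ / β₁|)
          + (-(β₂ * Real.log β₁)) * f x) (volume.restrict I) := h₃.add h₄
    have h234 : Integrable (fun x =>
        (-(β₁ * α₂) - β₂ * (1 - 2 * β₁)) * (f x * Real.log |f' x|)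
          + ((-β₂) * (f x * Real.log |f x * f'' x / (f' x) ^ 2 - α₁ / β₁|)
          + (-(β₂ * Real.log β₁)) * f x)) (volume.restrict I) := h₂.add h34
    rw [integral_add h₁ h234, integral_add h₂ h34, integral_add h₃ h₄, integral_const_mul,
      integral_const_mul, integral_const_mul, integral_const_mul]
  have hconv1 : (∫ x in I, f x * Real.log (f x)) = ∫ x, f x * Real.log (f x) :=
    setIntegral_eq_integral_of_forall_compl_eq_zero (fun x hx => by rw [hf_supp x hx]; simp)
  have hconv2 : (∫ x in I, f x * Real.log |f' x|) = ∫ x, f x * Real.log |f' x| :=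
    setIntegral_eq_integral_of_forall_compl_eq_zero (fun x hx => by rw [hf_supp x hx]; simp)
  have hconv3 : (∫ x in I, f x * Real.log |f x * f'' x / (f' x) ^ 2 - α₁ / β₁|)
      = ∫ x, f x * Real.log |f x * f'' x / (f' x) ^ 2 - α₁ / β₁| :=
    setIntegral_eq_integral_of_forall_compl_eq_zero (fun x hx => by rw [hf_supp x hx]; simp)
  rw [hstep1, hstep2, hsplit, hconv1, hconv2, hconv3, hintI_f]
  ring
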